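/- Let Γ ⊂ ℝ^d be a point set such that for every cluster type, uniform cluster frequencies exist (unique ergodicity of the hull). Then every element Γ' of the hull 𝕏(Γ) has the same autocorrelation measure γ = ∑_{z ∈ Γ−Γ} η(z) δ_z, where η(z) = lim_{r→∞} (1/vol(B_r)) card(Γ_r ∩ (z + Γ_r)). -/

import Mathlib

open Set Pointwise Metric Filter MeasureTheory

/-- `Γ'` lies in the hull `𝕏(Γ)` of `Γ` (closure of the translation orbit in the
local topology: on every large ball, `Γ'` agrees with a slightly translated
translate of `Γ`). -/
def InHull {d : ℕ} (Γ Γ' : Set (EuclideanSpace ℝ (Fin d))) : Prop :=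
  ∀ R > (0 : ℝ), ∀ ε > (0 : ℝ), ∃ t s : EuclideanSpace ℝ (Fin d), ‖s‖ < ε ∧
    ((s + t) +ᵥ Γ) ∩ ball 0 R = Γ' ∩ ball 0 R

/-- The finite-range autocorrelation `card(A_r ∩ (z + A_r)) / vol(B_r)`. -/
noncomputable def corrCoef {d : ℕ} (A : Set (EuclideanSpace ℝ (Fin d)))
    (z : EuclideanSpace ℝ (Fin d)) (r : ℝ) : ℝ :=
  (Set.ncard ((A ∩ ball 0 r) ∩ (z +ᵥ (A ∩ ball 0 r))) : ℝ) /
    (volume (ball (0 : EuclideanSpace ℝ (Fin d)) r)).toReal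

lemma translate_inter_compact_finite {d : ℕ} (Γ : Set (EuclideanSpace ℝ (Fin d)))
    (hFLC : ∀ K : Set (EuclideanSpace ℝ (Fin d)), IsCompact K → ((Γ - Γ) ∩ K).Finite)
    (t : EuclideanSpace ℝ (Fin d)) {K : Set (EuclideanSpace ℝ (Fin d))} (hK : IsCompact K) :
    ((t +ᵥ Γ) ∩ K).Finite := by
  rcases Γ.eq_empty_or_nonempty with h | ⟨a, ha⟩
  · simp [h]
  · have hK' : IsCompact ((fun x => x - (t + a)) '' K) :=
      hK.image (continuous_id.sub continuous_const)
    have hfin : ((Γ - Γ) ∩ ((fun x => x - (t + a)) '' K)).Finite := hFLC _ hK'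
    have hsub : (t +ᵥ Γ) ∩ K ⊆ (fun y => y + (t + a)) '' ((Γ - Γ) ∩ ((fun x => x - (t + a)) '' K)) := by
      rintro x ⟨hx, hxK⟩
      rw [mem_vadd_set_iff_neg_vadd_mem, vadd_eq_add] at hx
      refine ⟨x - (t + a), ⟨Set.mem_sub.2 ⟨-t + x, hx, a, ha, by abel⟩, ⟨x, hxK, rfl⟩⟩, sub_add_cancel x (t+a)⟩
    exact (hfin.image _).subset hsub

lemma vol_pos {d : ℕ} {r : ℝ} (hr : 0 < r) :
    0 < (volume (ball (0 : EuclideanSpace ℝ (Fin d)) r)).toReal :=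
  ENNReal.toReal_pos (measure_ball_pos volume 0 hr).ne' measure_ball_lt_top.ne

lemma vol_mono {d : ℕ} {r r' : ℝ} (h : r ≤ r') :
    (volume (ball (0 : EuclideanSpace ℝ (Fin d)) r)).toReal
      ≤ (volume (ball (0 : EuclideanSpace ℝ (Fin d)) r')).toReal :=
  ENNReal.toReal_mono measure_ball_lt_top.ne (measure_mono (ball_subset_ball h))

lemma vol_ratio_tendsto {d : ℕ} (c : ℝ) (hc : 0 ≤ c) :
    Tendsto (fun r : ℝ =>
        (volume (ball (0 : EuclideanSpace ℝ (Fin d)) (r - c))).toReal /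
        (volume (ball (0 : EuclideanSpace ℝ (Fin d)) r)).toReal) atTop (nhds 1) := by
  rcases Nat.eq_zero_or_pos d with hd | hd
  · subst hd
    have hsub : Subsingleton (EuclideanSpace ℝ (Fin 0)) := by
      infer_instance
    have hball : ∀ r : ℝ, 0 < r → ball (0 : EuclideanSpace ℝ (Fin 0)) r = univ := by
      intro r hr
      ext x
      simp [mem_ball, hsub.elim x 0, hr]
    have heq : ∀ᶠ r : ℝ in atTop,
        (volume (ball (0 : EuclideanSpace ℝ (Fin 0)) (r - c))).toReal /
        (volume (ball (0 : EuclideanSpace ℝ (Fin 0)) r)).toReal = 1 := by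
      filter_upwards [eventually_gt_atTop (c + 1)] with r hr
      rw [hball (r - c) (by linarith), hball r (by linarith), div_self]
      exact (ENNReal.toReal_pos (by rw [← hball 1 one_pos]; exact (measure_ball_pos volume 0 one_pos).ne')
        (by rw [← hball 1 one_pos]; exact measure_ball_lt_top.ne)).ne'
    exact tendsto_const_nhds.congr' (heq.mono fun r h => h.symm)
  · haveI : Nonempty (Fin d) := ⟨⟨0, hd⟩⟩
    haveI : Nontrivial (EuclideanSpace ℝ (Fin d)) := by
      infer_instance
    have hV1 : 0 < (volume (ball (0 : EuclideanSpace ℝ (Fin d)) 1)).toReal := vol_pos one_pos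
    have heq : ∀ᶠ r : ℝ in atTop,
        ((1 : ℝ) - c / r) ^ d =
        (volume (ball (0 : EuclideanSpace ℝ (Fin d)) (r - c))).toReal /
        (volume (ball (0 : EuclideanSpace ℝ (Fin d)) r)).toReal := by
      filter_upwards [eventually_gt_atTop (c + 1)] with r hr
      have hr0 : 0 < r := by linarith
      have hrc : 0 ≤ r - c := by linarith
      rw [Measure.addHaar_ball volume 0 hrc, Measure.addHaar_ball volume 0 hr0.le,
        ENNReal.toReal_mul, ENNReal.toReal_mul, ENNReal.toReal_ofReal (by positivity),
        ENNReal.toReal_ofReal (by positivity), finrank_euclideanSpace_fin,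
        mul_div_mul_right _ _ hV1.ne', ← div_pow]
      congr 1
      field_simp
    have hlim : Tendsto (fun r : ℝ => ((1 : ℝ) - c / r) ^ d) atTop (nhds 1) := by
      have : Tendsto (fun r : ℝ => (1 : ℝ) - c / r) atTop (nhds 1) := by
        have h0 : Tendsto (fun r : ℝ => c / r) atTop (nhds 0) := tendsto_const_nhds.div_atTop tendsto_id
        simpa using tendsto_const_nhds.sub h0
      simpa using this.pow d
    exact hlim.congr' heq

lemma count_partition {d : ℕ} (Γ : Set (EuclideanSpace ℝ (Fin d)))
    (hFLC : ∀ K : Set (EuclideanSpace ℝ (Fin d)), IsCompact K → ((Γ - Γ) ∩ K).Finite)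
    (ρ : ℝ) (t : EuclideanSpace ℝ (Fin d)) (r : ℝ)
    (u : Finset (Set (EuclideanSpace ℝ (Fin d)))) (Q : EuclideanSpace ℝ (Fin d) → Prop)
    (hQ : ∀ x, x ∈ t +ᵥ Γ → x ∈ ball (0 : EuclideanSpace ℝ (Fin d)) r →
      (Q x ↔ ((-x) +ᵥ (t +ᵥ Γ)) ∩ closedBall 0 ρ ∈ u)) :
    Set.ncard {x | x ∈ t +ᵥ Γ ∧ x ∈ ball (0 : EuclideanSpace ℝ (Fin d)) r ∧ Q x}
      = ∑ F ∈ u, Set.ncard {x | x ∈ t +ᵥ Γ ∧ x ∈ ball (0 : EuclideanSpace ℝ (Fin d)) r ∧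
          ((-x) +ᵥ (t +ᵥ Γ)) ∩ closedBall 0 ρ = F} := by
  classical
  have hfin : ((t +ᵥ Γ) ∩ ball 0 r).Finite :=
    (translate_inter_compact_finite Γ hFLC t (isCompact_closedBall 0 r)).subset
      (inter_subset_inter_right _ ball_subset_closedBall)
  set s : Finset (EuclideanSpace ℝ (Fin d)) := hfin.toFinset with hs
  set clu : EuclideanSpace ℝ (Fin d) → Set (EuclideanSpace ℝ (Fin d)) :=
    fun x => ((-x) +ᵥ (t +ᵥ Γ)) ∩ closedBall 0 ρ with hcludef
  have h1 : {x | x ∈ t +ᵥ Γ ∧ x ∈ ball (0 : EuclideanSpace ℝ (Fin d)) r ∧ Q x}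
      = ↑(s.filter Q) := by
    ext x
    simp only [Finset.coe_filter, hs, Set.Finite.mem_toFinset, mem_inter_iff, Set.mem_setOf_eq]
    tauto
  have h2 : ∀ F : Set (EuclideanSpace ℝ (Fin d)),
      {x | x ∈ t +ᵥ Γ ∧ x ∈ ball (0 : EuclideanSpace ℝ (Fin d)) r ∧ clu x = F}
      = ↑(s.filter (fun x => clu x = F)) := by
    intro F
    ext x
    simp only [Finset.coe_filter, hs, Set.Finite.mem_toFinset, mem_inter_iff, Set.mem_setOf_eq]
    tauto
  rw [h1, Set.ncard_coe_finset]
  have h3 : ∀ F ∈ u, Set.ncard {x | x ∈ t +ᵥ Γ ∧ x ∈ ball (0 : EuclideanSpace ℝ (Fin d)) r ∧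
      clu x = F} = (s.filter (fun x => clu x = F)).card := by
    intro F _
    rw [h2 F, Set.ncard_coe_finset]
  rw [Finset.sum_congr rfl h3]
  have hmem : ∀ x ∈ s.filter Q, clu x ∈ u := by
    intro x hx
    rw [Finset.mem_filter, hs, Set.Finite.mem_toFinset] at hx
    exact (hQ x hx.1.1 hx.1.2).1 hx.2
  rw [Finset.card_eq_sum_card_fiberwise hmem]
  refine Finset.sum_congr rfl fun F hF => ?_
  congr 1
  ext x
  simp only [Finset.mem_filter, hs, Set.Finite.mem_toFinset, mem_inter_iff]
  constructor
  · rintro ⟨⟨h, _⟩, hc⟩; exact ⟨h, hc⟩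
  · rintro ⟨⟨hA, hb⟩, hc⟩
    exact ⟨⟨⟨hA, hb⟩, (hQ x hA hb).2 (by rw [show ((-x) +ᵥ (t +ᵥ Γ)) ∩ closedBall 0 ρ = clu x from rfl, hc]; exact hF)⟩, hc⟩

set_option maxHeartbeats 1600000 in
lemma key_uniform {d : ℕ} (Γ : Set (EuclideanSpace ℝ (Fin d)))
    (hFLC : ∀ K : Set (EuclideanSpace ℝ (Fin d)), IsCompact K → ((Γ - Γ) ∩ K).Finite)
    (hUCF : ∀ (F : Set (EuclideanSpace ℝ (Fin d))) (ρ : ℝ), 0 < ρ →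
      ∃ f : ℝ, ∀ ε > (0 : ℝ), ∃ r₀ : ℝ, ∀ r ≥ r₀, ∀ t : EuclideanSpace ℝ (Fin d),
        |((Set.ncard {x | x ∈ (t +ᵥ Γ) ∧ x ∈ ball (0 : EuclideanSpace ℝ (Fin d)) r ∧
              ((-x) +ᵥ (t +ᵥ Γ)) ∩ closedBall 0 ρ = F} : ℝ) /
            (volume (ball (0 : EuclideanSpace ℝ (Fin d)) r)).toReal) - f| < ε)
    (z : EuclideanSpace ℝ (Fin d)) :
    ∃ c : ℝ, ∀ ε > (0 : ℝ), ∃ r₀ : ℝ, ∀ r ≥ r₀, ∀ t : EuclideanSpace ℝ (Fin d),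
      |corrCoef (t +ᵥ Γ) z r - c| ≤ ε := by
  classical
  set ρ : ℝ := ‖z‖ + 1 with hρdef
  have hρ : 0 < ρ := by rw [hρdef]; positivity
  have hS : ((Γ - Γ) ∩ closedBall 0 ρ).Finite := hFLC _ (isCompact_closedBall 0 ρ)
  have hTfin : {F : Set (EuclideanSpace ℝ (Fin d)) | F ⊆ (Γ - Γ) ∩ closedBall 0 ρ}.Finite :=
    hS.finite_subsets
  set 𝒯 : Finset (Set (EuclideanSpace ℝ (Fin d))) := hTfin.toFinset with h𝒯
  set 𝒮 : Finset (Set (EuclideanSpace ℝ (Fin d))) := 𝒯.filter (fun F => -z ∈ F) with h𝒮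
  choose f hf using fun F => hUCF F ρ hρ
  set D : ℝ := ∑ F ∈ 𝒯, f F with hD
  have hclu : ∀ (t x : EuclideanSpace ℝ (Fin d)), x ∈ t +ᵥ Γ →
      ((-x) +ᵥ (t +ᵥ Γ)) ∩ closedBall 0 ρ ∈ 𝒯 := by
    intro t x hx
    rw [h𝒯, Set.Finite.mem_toFinset]
    rintro y ⟨hy1, hy2⟩
    simp only [mem_vadd_set_iff_neg_vadd_mem, vadd_eq_add, neg_neg] at hy1 hx
    refine ⟨Set.mem_sub.2 ⟨-t + (x + y), hy1, -t + x, hx, by abel⟩, hy2⟩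
  have hz' : ∀ (t x : EuclideanSpace ℝ (Fin d)), x ∈ t +ᵥ Γ →
      ((x - z ∈ t +ᵥ Γ) ↔ -z ∈ ((-x) +ᵥ (t +ᵥ Γ)) ∩ closedBall 0 ρ) := by
    intro t x _
    constructor
    · intro h
      constructor
      · rw [mem_vadd_set_iff_neg_vadd_mem, vadd_eq_add, neg_neg, ← sub_eq_add_neg]
        exact h
      · rw [mem_closedBall_zero_iff, norm_neg, hρdef]
        linarith
    · rintro ⟨h1, _⟩
      rw [mem_vadd_set_iff_neg_vadd_mem, vadd_eq_add, neg_neg, ← sub_eq_add_neg] at h1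
      exact h1
  refine ⟨∑ F ∈ 𝒮, f F, ?_⟩
  intro ε hε
  set m : ℝ := (𝒯.card : ℝ) + 1 with hm'
  have hm : 0 < m := by rw [hm']; exact add_pos_of_nonneg_of_pos (Nat.cast_nonneg _) one_pos
  set ε₁ : ℝ := ε / (4 * m) with hε₁def
  have hε₁ : 0 < ε₁ := by rw [hε₁def]; exact div_pos hε (by linarith)
  have hε₁m : ε₁ * m = ε / 4 := by
    rw [hε₁def, div_mul_eq_mul_div, mul_div_mul_right _ _ hm.ne']
  choose r₀F hr₀F using fun F => hf F ε₁ hε₁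
  obtain ⟨r₁, hr₁⟩ := (𝒯.image r₀F).exists_le
  set δ : ℝ := ε / (4 * (|D| + 1)) with hδdef
  have hδ : 0 < δ := by rw [hδdef]; exact div_pos hε (by nlinarith [abs_nonneg D])
  have habs1 : (0:ℝ) < |D| + 1 := by nlinarith [abs_nonneg D]
  have hδprod : δ * (|D| + 1) = ε / 4 := by
    rw [hδdef, div_mul_eq_mul_div, mul_div_mul_right _ _ habs1.ne']
  obtain ⟨r₂, hr₂⟩ : ∃ r₂ : ℝ, ∀ r ≥ r₂, 1 - δ <
      (volume (ball (0 : EuclideanSpace ℝ (Fin d)) (r - ‖z‖))).toReal /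
      (volume (ball (0 : EuclideanSpace ℝ (Fin d)) r)).toReal := by
    have h := (vol_ratio_tendsto (d := d) ‖z‖ (norm_nonneg z)).eventually
      (eventually_gt_nhds (show 1 - δ < 1 by linarith))
    rw [eventually_atTop] at h
    exact h
  refine ⟨max (r₁ + ‖z‖ + 1) (max r₂ (‖z‖ + 1)), ?_⟩
  intro r hr t
  have hz0 : (0:ℝ) ≤ ‖z‖ := norm_nonneg z
  have hra := le_trans (le_max_left (r₁ + ‖z‖ + 1) _) hr
  have hrb := le_trans (le_trans (le_max_left r₂ (‖z‖+1)) (le_max_right (r₁ + ‖z‖ + 1) _)) hr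
  have hrc := le_trans (le_trans (le_max_right r₂ (‖z‖+1)) (le_max_right (r₁ + ‖z‖ + 1) _)) hr
  have hrr₁ : r₁ ≤ r := by linarith
  have hrr₁' : r₁ ≤ r - ‖z‖ := by linarith
  have hr0 : 0 < r := by linarith
  have hrc0 : 0 < r - ‖z‖ := by linarith
  have hbnd : ∀ F ∈ 𝒯, ∀ rr : ℝ, r₁ ≤ rr →
      |((Set.ncard {x | x ∈ (t +ᵥ Γ) ∧ x ∈ ball (0 : EuclideanSpace ℝ (Fin d)) rr ∧
            ((-x) +ᵥ (t +ᵥ Γ)) ∩ closedBall 0 ρ = F} : ℝ) /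
          (volume (ball (0 : EuclideanSpace ℝ (Fin d)) rr)).toReal) - f F| < ε₁ := by
    intro F hF rr hrr
    exact hr₀F F rr (le_trans (hr₁ _ (Finset.mem_image_of_mem r₀F hF)) hrr) t
  have hTot : ∀ rr : ℝ, ((t +ᵥ Γ) ∩ ball (0 : EuclideanSpace ℝ (Fin d)) rr).ncard
      = ∑ F ∈ 𝒯, Set.ncard {x | x ∈ (t +ᵥ Γ) ∧ x ∈ ball (0 : EuclideanSpace ℝ (Fin d)) rr ∧
          ((-x) +ᵥ (t +ᵥ Γ)) ∩ closedBall 0 ρ = F} := by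
    intro rr
    have h := count_partition Γ hFLC ρ t rr 𝒯 (fun _ => True)
      (fun x hx _ => iff_of_true trivial (hclu t x hx))
    rw [← h]
    congr 1
    ext x
    simp only [mem_inter_iff, Set.mem_setOf_eq, and_true]
  have hMid : Set.ncard {x | x ∈ (t +ᵥ Γ) ∧ x ∈ ball (0 : EuclideanSpace ℝ (Fin d)) r ∧
        x - z ∈ (t +ᵥ Γ)}
      = ∑ F ∈ 𝒮, Set.ncard {x | x ∈ (t +ᵥ Γ) ∧ x ∈ ball (0 : EuclideanSpace ℝ (Fin d)) r ∧
          ((-x) +ᵥ (t +ᵥ Γ)) ∩ closedBall 0 ρ = F} := by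
    refine count_partition Γ hFLC ρ t r 𝒮 _ ?_
    intro x hx _
    rw [h𝒮, Finset.mem_filter]
    constructor
    · intro h
      exact ⟨hclu t x hx, (hz' t x hx).1 h⟩
    · rintro ⟨_, h2⟩
      exact (hz' t x hx).2 h2
  have hfinA : ((t +ᵥ Γ) ∩ ball (0 : EuclideanSpace ℝ (Fin d)) r).Finite :=
    (translate_inter_compact_finite Γ hFLC t (isCompact_closedBall 0 r)).subset
      (inter_subset_inter_right _ ball_subset_closedBall)
  have hfinA' : ((t +ᵥ Γ) ∩ ball (0 : EuclideanSpace ℝ (Fin d)) (r - ‖z‖)).Finite :=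
    (translate_inter_compact_finite Γ hFLC t (isCompact_closedBall 0 (r - ‖z‖))).subset
      (inter_subset_inter_right _ ball_subset_closedBall)
  set Mset : Set (EuclideanSpace ℝ (Fin d)) :=
    {x | x ∈ (t +ᵥ Γ) ∧ x ∈ ball (0 : EuclideanSpace ℝ (Fin d)) r ∧ x - z ∈ (t +ᵥ Γ)}
    with hMsetdef
  set Nset : Set (EuclideanSpace ℝ (Fin d)) :=
    ((t +ᵥ Γ) ∩ ball 0 r) ∩ (z +ᵥ ((t +ᵥ Γ) ∩ ball (0 : EuclideanSpace ℝ (Fin d)) r))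
    with hNsetdef
  have hMsub : Mset ⊆ (t +ᵥ Γ) ∩ ball 0 r := fun x hx => ⟨hx.1, hx.2.1⟩
  have hMfin : Mset.Finite := hfinA.subset hMsub
  have hNsub : Nset ⊆ (t +ᵥ Γ) ∩ ball 0 r := inter_subset_left
  have hNfin : Nset.Finite := hfinA.subset hNsub
  have hNM : Nset ⊆ Mset := by
    rintro x ⟨⟨hxA, hxb⟩, hxz⟩
    rw [mem_vadd_set_iff_neg_vadd_mem, vadd_eq_add, neg_add_eq_sub] at hxz
    exact ⟨hxA, hxb, hxz.1⟩
  have hMN : Mset ⊆ Nset ∪ (((t +ᵥ Γ) ∩ ball 0 r) \ ball 0 (r - ‖z‖)) := by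
    rintro x ⟨hxA, hxb, hxz⟩
    by_cases hxzb : x - z ∈ ball (0 : EuclideanSpace ℝ (Fin d)) r
    · left
      refine ⟨⟨hxA, hxb⟩, ?_⟩
      rw [mem_vadd_set_iff_neg_vadd_mem, vadd_eq_add, neg_add_eq_sub]
      exact ⟨hxz, hxzb⟩
    · right
      refine ⟨⟨hxA, hxb⟩, fun hc => hxzb ?_⟩
      rw [mem_ball_zero_iff] at hc ⊢
      have h1 := norm_sub_le x z
      linarith
  have hsub2 : (t +ᵥ Γ) ∩ ball (0 : EuclideanSpace ℝ (Fin d)) (r - ‖z‖)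
      ⊆ (t +ᵥ Γ) ∩ ball 0 r :=
    inter_subset_inter_right _ (ball_subset_ball (by linarith))
  have hdiffeq : ((t +ᵥ Γ) ∩ ball 0 r) \ ball (0 : EuclideanSpace ℝ (Fin d)) (r - ‖z‖)
      = ((t +ᵥ Γ) ∩ ball 0 r) \ ((t +ᵥ Γ) ∩ ball 0 (r - ‖z‖)) := by
    ext x
    simp only [mem_diff, mem_inter_iff]
    tauto
  have hT'T : ((t +ᵥ Γ) ∩ ball (0 : EuclideanSpace ℝ (Fin d)) (r - ‖z‖)).ncard
      ≤ ((t +ᵥ Γ) ∩ ball (0 : EuclideanSpace ℝ (Fin d)) r).ncard :=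
    Set.ncard_le_ncard hsub2 hfinA
  have hNleM : Nset.ncard ≤ Mset.ncard := Set.ncard_le_ncard hNM hMfin
  have hMleN : Mset.ncard ≤ Nset.ncard +
      (((t +ᵥ Γ) ∩ ball (0 : EuclideanSpace ℝ (Fin d)) r).ncard -
       ((t +ᵥ Γ) ∩ ball (0 : EuclideanSpace ℝ (Fin d)) (r - ‖z‖)).ncard) := by
    have h1 : Mset.ncard ≤ (Nset ∪ (((t +ᵥ Γ) ∩ ball 0 r) \ ball 0 (r - ‖z‖))).ncard :=
      Set.ncard_le_ncard hMN (hNfin.union hfinA.diff)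
    have h2 := Set.ncard_union_le Nset (((t +ᵥ Γ) ∩ ball 0 r) \ ball 0 (r - ‖z‖))
    have h3 : (((t +ᵥ Γ) ∩ ball 0 r) \ ball (0 : EuclideanSpace ℝ (Fin d)) (r - ‖z‖)).ncard
        = ((t +ᵥ Γ) ∩ ball (0 : EuclideanSpace ℝ (Fin d)) r).ncard -
          ((t +ᵥ Γ) ∩ ball (0 : EuclideanSpace ℝ (Fin d)) (r - ‖z‖)).ncard := by
      rw [hdiffeq]
      exact Set.ncard_diff hsub2 hfinA'
    omega
  have hV : 0 < (volume (ball (0 : EuclideanSpace ℝ (Fin d)) r)).toReal := vol_pos hr0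
  have hV' : 0 < (volume (ball (0 : EuclideanSpace ℝ (Fin d)) (r - ‖z‖))).toReal :=
    vol_pos hrc0
  have hκ := hr₂ r hrb
  have hκ1 : (volume (ball (0 : EuclideanSpace ℝ (Fin d)) (r - ‖z‖))).toReal /
      (volume (ball (0 : EuclideanSpace ℝ (Fin d)) r)).toReal ≤ 1 :=
    div_le_one_of_le₀ (vol_mono (by linarith)) hV.le
  have hκ0 : 0 ≤ (volume (ball (0 : EuclideanSpace ℝ (Fin d)) (r - ‖z‖))).toReal /
      (volume (ball (0 : EuclideanSpace ℝ (Fin d)) r)).toReal :=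
    div_nonneg ENNReal.toReal_nonneg ENNReal.toReal_nonneg
  have hMreal : (Mset.ncard : ℝ) = ∑ F ∈ 𝒮,
      (Set.ncard {x | x ∈ (t +ᵥ Γ) ∧ x ∈ ball (0 : EuclideanSpace ℝ (Fin d)) r ∧
        ((-x) +ᵥ (t +ᵥ Γ)) ∩ closedBall 0 ρ = F} : ℝ) := by
    exact_mod_cast hMid
  have hTreal : ∀ rr : ℝ, (((t +ᵥ Γ) ∩ ball (0 : EuclideanSpace ℝ (Fin d)) rr).ncard : ℝ)
      = ∑ F ∈ 𝒯, (Set.ncard {x | x ∈ (t +ᵥ Γ) ∧ x ∈ ball (0 : EuclideanSpace ℝ (Fin d)) rr ∧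
          ((-x) +ᵥ (t +ᵥ Γ)) ∩ closedBall 0 ρ = F} : ℝ) := by
    intro rr
    exact_mod_cast hTot rr
  have hcards : (𝒯.card : ℝ) * ε₁ ≤ ε / 4 := by
    have h1 : (𝒯.card : ℝ) ≤ m - 1 := by rw [hm']; simp
    have h2 := mul_le_mul_of_nonneg_right h1 hε₁.le
    nlinarith [hε₁, hε₁m]
  have ha : |(Mset.ncard : ℝ) /
      (volume (ball (0 : EuclideanSpace ℝ (Fin d)) r)).toReal - ∑ F ∈ 𝒮, f F| ≤ ε / 4 := by
    have h0 : (Mset.ncard : ℝ) / (volume (ball (0 : EuclideanSpace ℝ (Fin d)) r)).toReal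
        - ∑ F ∈ 𝒮, f F
        = ∑ F ∈ 𝒮, ((Set.ncard {x | x ∈ (t +ᵥ Γ) ∧
            x ∈ ball (0 : EuclideanSpace ℝ (Fin d)) r ∧
            ((-x) +ᵥ (t +ᵥ Γ)) ∩ closedBall 0 ρ = F} : ℝ) /
            (volume (ball (0 : EuclideanSpace ℝ (Fin d)) r)).toReal - f F) := by
      rw [hMreal, Finset.sum_div, Finset.sum_sub_distrib]
    rw [h0]
    have hcard𝒮 : (𝒮.card : ℝ) ≤ (𝒯.card : ℝ) := by
      exact_mod_cast Finset.card_le_card (by rw [h𝒮]; exact Finset.filter_subset _ _)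
    calc |∑ F ∈ 𝒮, ((Set.ncard {x | x ∈ (t +ᵥ Γ) ∧
            x ∈ ball (0 : EuclideanSpace ℝ (Fin d)) r ∧
            ((-x) +ᵥ (t +ᵥ Γ)) ∩ closedBall 0 ρ = F} : ℝ) /
            (volume (ball (0 : EuclideanSpace ℝ (Fin d)) r)).toReal - f F)|
        ≤ ∑ F ∈ 𝒮, |(Set.ncard {x | x ∈ (t +ᵥ Γ) ∧
            x ∈ ball (0 : EuclideanSpace ℝ (Fin d)) r ∧
            ((-x) +ᵥ (t +ᵥ Γ)) ∩ closedBall 0 ρ = F} : ℝ) /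
            (volume (ball (0 : EuclideanSpace ℝ (Fin d)) r)).toReal - f F| :=
          Finset.abs_sum_le_sum_abs _ _
      _ ≤ ∑ _F ∈ 𝒮, ε₁ := Finset.sum_le_sum (fun F hF =>
          (hbnd F (by rw [h𝒮] at hF; exact Finset.mem_of_mem_filter F hF) r hrr₁).le)
      _ = (𝒮.card : ℝ) * ε₁ := by rw [Finset.sum_const, nsmul_eq_mul]
      _ ≤ (𝒯.card : ℝ) * ε₁ := mul_le_mul_of_nonneg_right hcard𝒮 hε₁.le
      _ ≤ ε / 4 := hcards
  have hbT : (((t +ᵥ Γ) ∩ ball (0 : EuclideanSpace ℝ (Fin d)) r).ncard : ℝ) /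
      (volume (ball (0 : EuclideanSpace ℝ (Fin d)) r)).toReal ≤ D + ε / 4 := by
    rw [hTreal r, Finset.sum_div]
    calc ∑ F ∈ 𝒯, ((Set.ncard {x | x ∈ (t +ᵥ Γ) ∧
            x ∈ ball (0 : EuclideanSpace ℝ (Fin d)) r ∧
            ((-x) +ᵥ (t +ᵥ Γ)) ∩ closedBall 0 ρ = F} : ℝ) /
            (volume (ball (0 : EuclideanSpace ℝ (Fin d)) r)).toReal)
        ≤ ∑ F ∈ 𝒯, (f F + ε₁) := Finset.sum_le_sum (fun F hF => by
          have h := abs_lt.1 (hbnd F hF r hrr₁)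
          linarith [h.2])
      _ = D + (𝒯.card : ℝ) * ε₁ := by
          rw [Finset.sum_add_distrib, Finset.sum_const, nsmul_eq_mul, ← hD]
      _ ≤ D + ε / 4 := by linarith [hcards]
  have hcT : D - ε / 4 ≤
      (((t +ᵥ Γ) ∩ ball (0 : EuclideanSpace ℝ (Fin d)) (r - ‖z‖)).ncard : ℝ) /
      (volume (ball (0 : EuclideanSpace ℝ (Fin d)) (r - ‖z‖))).toReal := by
    rw [hTreal (r - ‖z‖), Finset.sum_div]
    calc D - ε / 4 ≤ D - (𝒯.card : ℝ) * ε₁ := by linarith [hcards]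
      _ = ∑ F ∈ 𝒯, (f F - ε₁) := by
          rw [Finset.sum_sub_distrib, Finset.sum_const, nsmul_eq_mul, ← hD]
      _ ≤ ∑ F ∈ 𝒯, ((Set.ncard {x | x ∈ (t +ᵥ Γ) ∧
            x ∈ ball (0 : EuclideanSpace ℝ (Fin d)) (r - ‖z‖) ∧
            ((-x) +ᵥ (t +ᵥ Γ)) ∩ closedBall 0 ρ = F} : ℝ) /
            (volume (ball (0 : EuclideanSpace ℝ (Fin d)) (r - ‖z‖))).toReal) :=
          Finset.sum_le_sum (fun F hF => by
            have h := abs_lt.1 (hbnd F hF (r - ‖z‖) hrr₁')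
            linarith [h.1])
  have hsplit : (((t +ᵥ Γ) ∩ ball (0 : EuclideanSpace ℝ (Fin d)) (r - ‖z‖)).ncard : ℝ) /
      (volume (ball (0 : EuclideanSpace ℝ (Fin d)) r)).toReal =
      ((((t +ᵥ Γ) ∩ ball (0 : EuclideanSpace ℝ (Fin d)) (r - ‖z‖)).ncard : ℝ) /
        (volume (ball (0 : EuclideanSpace ℝ (Fin d)) (r - ‖z‖))).toReal) *
      ((volume (ball (0 : EuclideanSpace ℝ (Fin d)) (r - ‖z‖))).toReal /
        (volume (ball (0 : EuclideanSpace ℝ (Fin d)) r)).toReal) := by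
    rw [div_mul_div_comm,
      mul_comm (((((t +ᵥ Γ) ∩ ball (0 : EuclideanSpace ℝ (Fin d)) (r - ‖z‖)).ncard : ℝ))),
      mul_div_mul_left _ _ hV'.ne']
  have hge : (D - ε / 4) *
      ((volume (ball (0 : EuclideanSpace ℝ (Fin d)) (r - ‖z‖))).toReal /
        (volume (ball (0 : EuclideanSpace ℝ (Fin d)) r)).toReal) ≤
      (((t +ᵥ Γ) ∩ ball (0 : EuclideanSpace ℝ (Fin d)) (r - ‖z‖)).ncard : ℝ) /
      (volume (ball (0 : EuclideanSpace ℝ (Fin d)) r)).toReal := by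
    rw [hsplit]
    exact mul_le_mul_of_nonneg_right hcT hκ0
  have he : ((((t +ᵥ Γ) ∩ ball (0 : EuclideanSpace ℝ (Fin d)) r).ncard : ℝ) -
      (((t +ᵥ Γ) ∩ ball (0 : EuclideanSpace ℝ (Fin d)) (r - ‖z‖)).ncard : ℝ)) /
      (volume (ball (0 : EuclideanSpace ℝ (Fin d)) r)).toReal ≤ 3 * ε / 4 := by
    rw [sub_div]
    obtain ⟨κ, hκdef⟩ : ∃ κ' : ℝ,
        (volume (ball (0 : EuclideanSpace ℝ (Fin d)) (r - ‖z‖))).toReal /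
        (volume (ball (0 : EuclideanSpace ℝ (Fin d)) r)).toReal = κ' := ⟨_, rfl⟩
    rw [hκdef] at hκ hκ1 hκ0 hge
    have e3 : 0 ≤ ε * (1 - κ) := mul_nonneg hε.le (by linarith [hκ1])
    have e1 : 0 ≤ (|D| - D) * (1 - κ) :=
      mul_nonneg (by linarith [le_abs_self D]) (by linarith [hκ1])
    have e2 : 0 ≤ |D| * (δ - (1 - κ)) := mul_nonneg (abs_nonneg D) (by linarith [hκ])
    have h4 : (((t +ᵥ Γ) ∩ ball (0 : EuclideanSpace ℝ (Fin d)) r).ncard : ℝ) /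
        (volume (ball (0 : EuclideanSpace ℝ (Fin d)) r)).toReal -
        (((t +ᵥ Γ) ∩ ball (0 : EuclideanSpace ℝ (Fin d)) (r - ‖z‖)).ncard : ℝ) /
        (volume (ball (0 : EuclideanSpace ℝ (Fin d)) r)).toReal ≤
        (D + ε / 4) - (D - ε / 4) * κ := by
      linarith [hbT, hge]
    nlinarith [e1, e2, e3, hδprod, hδ, h4]
  have hNreal : (Nset.ncard : ℝ) ≤ (Mset.ncard : ℝ) := by exact_mod_cast hNleM
  have hMrealle : (Mset.ncard : ℝ) ≤ (Nset.ncard : ℝ) +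
      ((((t +ᵥ Γ) ∩ ball (0 : EuclideanSpace ℝ (Fin d)) r).ncard : ℝ) -
       (((t +ᵥ Γ) ∩ ball (0 : EuclideanSpace ℝ (Fin d)) (r - ‖z‖)).ncard : ℝ)) := by
    calc (Mset.ncard : ℝ)
        ≤ ((Nset.ncard + (((t +ᵥ Γ) ∩ ball (0 : EuclideanSpace ℝ (Fin d)) r).ncard -
            ((t +ᵥ Γ) ∩ ball (0 : EuclideanSpace ℝ (Fin d)) (r - ‖z‖)).ncard) : ℕ) : ℝ) := by
          exact_mod_cast hMleN
      _ = (Nset.ncard : ℝ) +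
          ((((t +ᵥ Γ) ∩ ball (0 : EuclideanSpace ℝ (Fin d)) r).ncard : ℝ) -
           (((t +ᵥ Γ) ∩ ball (0 : EuclideanSpace ℝ (Fin d)) (r - ‖z‖)).ncard : ℝ)) := by
          push_cast [hT'T]
          ring
  have hgoal : corrCoef (t +ᵥ Γ) z r = (Nset.ncard : ℝ) /
      (volume (ball (0 : EuclideanSpace ℝ (Fin d)) r)).toReal := rfl
  rw [hgoal]
  have hd1 : (Nset.ncard : ℝ) / (volume (ball (0 : EuclideanSpace ℝ (Fin d)) r)).toReal
      ≤ (Mset.ncard : ℝ) / (volume (ball (0 : EuclideanSpace ℝ (Fin d)) r)).toReal := by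
    gcongr
  have hd2 : (Mset.ncard : ℝ) / (volume (ball (0 : EuclideanSpace ℝ (Fin d)) r)).toReal -
      (Nset.ncard : ℝ) / (volume (ball (0 : EuclideanSpace ℝ (Fin d)) r)).toReal ≤
      ((((t +ᵥ Γ) ∩ ball (0 : EuclideanSpace ℝ (Fin d)) r).ncard : ℝ) -
       (((t +ᵥ Γ) ∩ ball (0 : EuclideanSpace ℝ (Fin d)) (r - ‖z‖)).ncard : ℝ)) /
      (volume (ball (0 : EuclideanSpace ℝ (Fin d)) r)).toReal := by
    rw [← sub_div]
    exact (div_le_div_iff_of_pos_right hV).2 (by linarith [hMrealle])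
  obtain ⟨ha1, ha2⟩ := abs_le.1 ha
  rw [abs_le]
  constructor
  · linarith [hd1, hd2, he]
  · linarith [hd1, hd2, he]

/-- If the FLC set `Γ ⊂ ℝ^d` has uniform cluster frequencies
(unique ergodicity of its hull), then every element `Γ'` of the hull `𝕏(Γ)` has
the same autocorrelation coefficients `η(z) = lim_{r→∞} card(Γ_r ∩ (z+Γ_r))/vol(B_r)`. -/
theorem hull_has_same_autocorrelation {d : ℕ}
    (Γ : Set (EuclideanSpace ℝ (Fin d)))
    (hFLC : ∀ K : Set (EuclideanSpace ℝ (Fin d)), IsCompact K → ((Γ - Γ) ∩ K).Finite)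
    -- uniform cluster frequencies: for every cluster `F` at radius `ρ`, the
    -- frequency exists uniformly in the translation parameter `t`
    (hUCF : ∀ (F : Set (EuclideanSpace ℝ (Fin d))) (ρ : ℝ), 0 < ρ →
      ∃ f : ℝ, ∀ ε > (0 : ℝ), ∃ r₀ : ℝ, ∀ r ≥ r₀, ∀ t : EuclideanSpace ℝ (Fin d),
        |((Set.ncard {x | x ∈ (t +ᵥ Γ) ∧ x ∈ ball (0 : EuclideanSpace ℝ (Fin d)) r ∧
              ((-x) +ᵥ (t +ᵥ Γ)) ∩ closedBall 0 ρ = F} : ℝ) /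
            (volume (ball (0 : EuclideanSpace ℝ (Fin d)) r)).toReal) - f| < ε) :
    ∃ η : EuclideanSpace ℝ (Fin d) → ℝ,
      (∀ z, Tendsto (corrCoef Γ z) atTop (nhds (η z))) ∧
      (∀ Γ', InHull Γ Γ' → ∀ z, Tendsto (corrCoef Γ' z) atTop (nhds (η z))) := by
  classical
  choose η hη using fun z => key_uniform Γ hFLC hUCF z
  refine ⟨η, ?_, ?_⟩
  · intro z
    rw [Metric.tendsto_atTop]
    intro ε hε
    obtain ⟨r₀, h0⟩ := hη z (ε / 2) (by linarith)
    refine ⟨r₀, fun r hr => ?_⟩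
    have h1 := h0 r hr 0
    rw [zero_vadd] at h1
    rw [Real.dist_eq]
    linarith
  · intro Γ' hΓ' z
    rw [Metric.tendsto_atTop]
    intro ε hε
    obtain ⟨r₀, h0⟩ := hη z (ε / 2) (by linarith)
    refine ⟨r₀, fun r hr => ?_⟩
    obtain ⟨t, s, _, heq⟩ := hΓ' (max r 1)
      (lt_of_lt_of_le one_pos (le_max_right r 1)) 1 one_pos
    have hball : ball (0 : EuclideanSpace ℝ (Fin d)) r ⊆ ball 0 (max r 1) :=
      ball_subset_ball (le_max_left r 1)
    have hsets : ((s + t) +ᵥ Γ) ∩ ball (0 : EuclideanSpace ℝ (Fin d)) r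
        = Γ' ∩ ball 0 r := by
      have h1 : (((s + t) +ᵥ Γ) ∩ ball 0 (max r 1)) ∩ ball (0 : EuclideanSpace ℝ (Fin d)) r
          = (Γ' ∩ ball 0 (max r 1)) ∩ ball 0 r := by rw [heq]
      rwa [inter_assoc, inter_assoc, inter_eq_right.2 hball] at h1
    have hcorr : corrCoef Γ' z r = corrCoef ((s + t) +ᵥ Γ) z r := by
      unfold corrCoef
      rw [hsets]
    rw [Real.dist_eq, hcorr]
    have h2 := h0 r hr (s + t)
    linarith
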